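/- For all t ∈ (0, π/2): 3·cos²(t/2)/(2cos(t/2)+1) < sin t / t < (4(√2+1)/π)·cos²(t/2)/(2cos(t/2)+1). -/

import Mathlib

open Real

noncomputable def pfun : ℝ → ℝ := fun y => 2 * Real.sin y + Real.tan y

lemma hasDerivAt_pfun (x : ℝ) (hx : Real.cos x ≠ 0) :
    HasDerivAt pfun (2 * Real.cos x + 1 / Real.cos x ^ 2) x :=
  ((Real.hasDerivAt_sin x).const_mul 2).add (Real.hasDerivAt_tan hx)

lemma deriv_pfun (x : ℝ) (hx : Real.cos x ≠ 0) :
    deriv pfun x = 2 * Real.cos x + 1 / Real.cos x ^ 2 :=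
  (hasDerivAt_pfun x hx).deriv

noncomputable def qfun : ℝ → ℝ := fun y => 2 * Real.cos y + (Real.cos y ^ 2)⁻¹

lemma hasDerivAt_qfun (x : ℝ) (hx : Real.cos x ≠ 0) :
    HasDerivAt qfun (-2 * Real.sin x + 2 * Real.sin x / Real.cos x ^ 3) x := by
  have h1 : HasDerivAt (fun y => Real.cos y ^ 2) (2 * Real.cos x ^ 1 * (-Real.sin x)) x :=
    (Real.hasDerivAt_cos x).pow 2
  have h2 : HasDerivAt (fun y => (Real.cos y ^ 2)⁻¹)
      (-(2 * Real.cos x ^ 1 * (-Real.sin x)) / (Real.cos x ^ 2) ^ 2) x :=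
    h1.inv (pow_ne_zero 2 hx)
  have h3 : HasDerivAt qfun
      (2 * (-Real.sin x) + -(2 * Real.cos x ^ 1 * (-Real.sin x)) / (Real.cos x ^ 2) ^ 2) x :=
    ((Real.hasDerivAt_cos x).const_mul 2).add h2
  convert h3 using 1
  field_simp

lemma cont_pfun {a b : ℝ} (hb : b < Real.pi / 2) (ha : 0 ≤ a) :
    ContinuousOn pfun (Set.Icc a b) := by
  have hpi := Real.pi_pos
  have hsub : Set.Icc a b ⊆ {x | Real.cos x ≠ 0} := by
    intro x hx
    have : 0 < Real.cos x := Real.cos_pos_of_mem_Ioo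
      ⟨by linarith [hx.1], lt_of_le_of_lt hx.2 hb⟩
    exact ne_of_gt this
  exact ((Real.continuous_sin.continuousOn.const_smul 2).add
    (Real.continuousOn_tan.mono hsub)).congr (fun x _ => by simp [pfun, smul_eq_mul])

lemma cos_lt_one' {x : ℝ} (hx0 : 0 < x) (hx : x < Real.pi) : Real.cos x < 1 := by
  have hs : 0 < Real.sin x := Real.sin_pos_of_pos_of_lt_pi hx0 hx
  nlinarith [Real.sin_sq_add_cos_sq x, Real.neg_one_le_cos x]

lemma key1 {u : ℝ} (hu0 : 0 < u) (hu : u < Real.pi / 2) :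
    3 * u < 2 * Real.sin u + Real.tan u := by
  have hpi := Real.pi_pos
  have hmono : StrictMonoOn (fun x => pfun x - 3 * x) (Set.Icc 0 u) := by
    apply strictMonoOn_of_deriv_pos (convex_Icc 0 u)
    · exact (cont_pfun hu le_rfl).sub ((continuous_const.mul continuous_id).continuousOn)
    · intro x hx
      rw [interior_Icc] at hx
      have hxpi : x < Real.pi / 2 := hx.2.trans hu
      have hc : 0 < Real.cos x := Real.cos_pos_of_mem_Ioo ⟨by linarith [hx.1], hxpi⟩
      have hc1 : Real.cos x < 1 := cos_lt_one' hx.1 (by linarith)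
      have hd3 : HasDerivAt (fun y : ℝ => 3 * y) 3 x := by
        simpa using (hasDerivAt_id x).const_mul 3
      have hd : HasDerivAt (fun x => pfun x - 3 * x)
          (2 * Real.cos x + 1 / Real.cos x ^ 2 - 3) x :=
        (hasDerivAt_pfun x (ne_of_gt hc)).sub hd3
      rw [hd.deriv]
      have heq : 2 * Real.cos x + 1 / Real.cos x ^ 2 - 3 =
          (Real.cos x - 1) ^ 2 * (2 * Real.cos x + 1) / Real.cos x ^ 2 := by
        field_simp; ring
      rw [heq]
      apply div_pos (by nlinarith) (by positivity)
  have := hmono (Set.left_mem_Icc.2 hu0.le) (Set.right_mem_Icc.2 hu0.le) hu0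
  simp [pfun] at this
  linarith

lemma key2 {u : ℝ} (hu0 : 0 < u) (hu : u < Real.pi / 4) :
    2 * Real.sin u + Real.tan u < (4 * (Real.sqrt 2 + 1) / Real.pi) * u := by
  have hpi : 0 < Real.pi := Real.pi_pos
  have hconv : StrictConvexOn ℝ (Set.Icc 0 (Real.pi / 4)) pfun := by
    apply strictConvexOn_of_deriv2_pos (convex_Icc _ _) (cont_pfun (by linarith) le_rfl)
    intro x hx
    rw [interior_Icc] at hx
    have hxpi : x < Real.pi / 2 := by linarith [hx.2]
    have hc : 0 < Real.cos x := Real.cos_pos_of_mem_Ioo ⟨by linarith [hx.1], hxpi⟩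
    have hc1 : Real.cos x < 1 := cos_lt_one' hx.1 (by linarith)
    have hs : 0 < Real.sin x := Real.sin_pos_of_pos_of_lt_pi hx.1 (by linarith)
    have hev : deriv pfun =ᶠ[nhds x] qfun := by
      have hopen : IsOpen {y : ℝ | Real.cos y ≠ 0} := isOpen_ne.preimage Real.continuous_cos
      filter_upwards [hopen.mem_nhds (ne_of_gt hc)] with y hy
      rw [deriv_pfun y hy]
      simp [qfun, one_div]
    have hd2 : deriv (deriv pfun) x = -2 * Real.sin x + 2 * Real.sin x / Real.cos x ^ 3 := by
      rw [hev.deriv_eq]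
      exact (hasDerivAt_qfun x (ne_of_gt hc)).deriv
    rw [show deriv^[2] pfun x = deriv (deriv pfun) x from rfl, hd2]
    have hc3 : Real.cos x ^ 3 < 1 := pow_lt_one₀ hc.le hc1 (by norm_num)
    have heq : -2 * Real.sin x + 2 * Real.sin x / Real.cos x ^ 3 =
        2 * Real.sin x * (1 - Real.cos x ^ 3) / Real.cos x ^ 3 := by field_simp; ring
    rw [heq]
    apply div_pos (by nlinarith) (by positivity)
  have h0 : pfun 0 = 0 := by simp [pfun]
  have h4 : pfun (Real.pi / 4) = Real.sqrt 2 + 1 := by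
    simp [pfun, Real.sin_pi_div_four, Real.tan_pi_div_four]
    ring
  set b : ℝ := 4 * u / Real.pi with hb
  have hb0 : 0 < b := by positivity
  have hb1 : b < 1 := by rw [hb, div_lt_one hpi]; linarith
  have hcomb := hconv.2 (Set.left_mem_Icc.2 (by linarith)) (Set.right_mem_Icc.2 (by linarith))
    ((by positivity : (0:ℝ) < Real.pi / 4).ne) (by linarith : 0 < 1 - b) hb0 (by ring)
  have hu_eq : (1 - b) • (0:ℝ) + b • (Real.pi / 4) = u := by
    rw [smul_eq_mul, smul_eq_mul, hb]; field_simp; ring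
  rw [hu_eq, h0, h4] at hcomb
  have hfin : pfun u < b * (Real.sqrt 2 + 1) := by simpa using hcomb
  calc 2 * Real.sin u + Real.tan u = pfun u := rfl
    _ < b * (Real.sqrt 2 + 1) := hfin
    _ = (4 * (Real.sqrt 2 + 1) / Real.pi) * u := by rw [hb]; field_simp

theorem stmt13 (t : ℝ) (ht : t ∈ Set.Ioo 0 (Real.pi/2)) :
    3 * (Real.cos (t/2))^2 / (2*Real.cos (t/2) + 1) < Real.sin t / t ∧
    Real.sin t / t < (4*(Real.sqrt 2 + 1)/Real.pi) * ((Real.cos (t/2))^2 / (2*Real.cos (t/2) + 1)) := by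
  obtain ⟨ht0, ht2⟩ := ht
  obtain ⟨u, rfl⟩ : ∃ u, t = 2 * u := ⟨t / 2, by ring⟩
  rw [show 2 * u / 2 = u by ring]
  have hpi : 0 < Real.pi := Real.pi_pos
  have hu0 : 0 < u := by linarith
  have hu4 : u < Real.pi / 4 := by linarith
  have hc : 0 < Real.cos u := Real.cos_pos_of_mem_Ioo ⟨by linarith, by linarith⟩
  have hs : 0 < Real.sin u := Real.sin_pos_of_pos_of_lt_pi hu0 (by linarith)
  have hsin : Real.sin (2 * u) = 2 * Real.sin u * Real.cos u := Real.sin_two_mul u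
  have htan : Real.tan u = Real.sin u / Real.cos u := Real.tan_eq_sin_div_cos u
  have hden : 0 < 2 * Real.cos u + 1 := by linarith
  have h1 := key1 hu0 (by linarith)
  have h2 := key2 hu0 hu4
  rw [htan] at h1 h2
  have hsc : Real.sin u / Real.cos u * Real.cos u = Real.sin u :=
    div_mul_cancel₀ _ hc.ne'
  have h1' : 3 * u * Real.cos u < 2 * Real.sin u * Real.cos u + Real.sin u := by
    nlinarith [mul_lt_mul_of_pos_right h1 hc]
  have h2' : 2 * Real.sin u * Real.cos u + Real.sin u <
      (4 * (Real.sqrt 2 + 1) / Real.pi) * u * Real.cos u := by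
    nlinarith [mul_lt_mul_of_pos_right h2 hc]
  constructor
  · rw [hsin, div_lt_div_iff₀ hden ht0]
    nlinarith [mul_lt_mul_of_pos_right h1' hc]
  · rw [hsin, mul_div_assoc', div_lt_div_iff₀ ht0 hden]
    nlinarith [mul_lt_mul_of_pos_right h2' hc]
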